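/- Let p be a prime and let A, B, C be integers with gcd(A, B) = 1, A·B ≠ 0, and A^4 + B^4 = C^p. Then gcd(6, C) = 1; that is, C is divisible by neither 2 nor 3. -/

import Mathlib

theorem six_coprime_to_C (p : ℕ) (hp : p.Prime) (A B C : ℤ)
    (hAB : Int.gcd A B = 1) (hABne : A * B ≠ 0) (h : A ^ 4 + B ^ 4 = C ^ p) :
    Int.gcd 6 C = 1 := by
  have hco : IsCoprime A B := Int.isCoprime_iff_gcd_eq_one.mpr hAB
  -- 2 does not divide C
  have h2 : ¬ (2:ℤ) ∣ C := by
    intro hd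
    have h4 : (4:ℤ) ∣ A ^ 4 + B ^ 4 := by
      rw [h]
      have : (2:ℤ) ^ 2 ∣ (2:ℤ) ^ p := pow_dvd_pow 2 hp.two_le
      calc (4:ℤ) = 2 ^ 2 := by norm_num
        _ ∣ 2 ^ p := this
        _ ∣ C ^ p := pow_dvd_pow_of_dvd hd p
    have hz : ((A : ZMod 4)) ^ 4 + (B : ZMod 4) ^ 4 = 0 := by
      have := (ZMod.intCast_zmod_eq_zero_iff_dvd (A ^ 4 + B ^ 4) 4).mpr h4
      push_cast at this
      exact this
    have key : ∀ a b : ZMod 4, a ^ 4 + b ^ 4 = 0 → a ^ 2 = 0 ∧ b ^ 2 = 0 := by decide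
    obtain ⟨ha, hb⟩ := key _ _ hz
    have hA2 : (4:ℤ) ∣ A ^ 2 :=
      (ZMod.intCast_zmod_eq_zero_iff_dvd (A ^ 2) 4).mp (by push_cast; exact ha)
    have hB2 : (4:ℤ) ∣ B ^ 2 :=
      (ZMod.intCast_zmod_eq_zero_iff_dvd (B ^ 2) 4).mp (by push_cast; exact hb)
    have hpA : (2:ℤ) ∣ A := Int.prime_two.dvd_of_dvd_pow (dvd_trans (by norm_num) hA2)
    have hpB : (2:ℤ) ∣ B := Int.prime_two.dvd_of_dvd_pow (dvd_trans (by norm_num) hB2)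
    have := hco.isUnit_of_dvd' hpA hpB
    rw [Int.isUnit_iff] at this
    omega
  -- 3 does not divide C
  have h3 : ¬ (3:ℤ) ∣ C := by
    intro hd
    have h3d : (3:ℤ) ∣ A ^ 4 + B ^ 4 := by
      rw [h]
      exact dvd_pow hd hp.ne_zero
    have hz : ((A : ZMod 3)) ^ 4 + (B : ZMod 3) ^ 4 = 0 := by
      have := (ZMod.intCast_zmod_eq_zero_iff_dvd (A ^ 4 + B ^ 4) 3).mpr h3d
      push_cast at this
      exact this
    have key : ∀ a b : ZMod 3, a ^ 4 + b ^ 4 = 0 → a = 0 ∧ b = 0 := by decide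
    obtain ⟨ha, hb⟩ := key _ _ hz
    have hpA : (3:ℤ) ∣ A := (ZMod.intCast_zmod_eq_zero_iff_dvd A 3).mp (by exact_mod_cast ha)
    have hpB : (3:ℤ) ∣ B := (ZMod.intCast_zmod_eq_zero_iff_dvd B 3).mp (by exact_mod_cast hb)
    have := hco.isUnit_of_dvd' hpA hpB
    rw [Int.isUnit_iff] at this
    omega
  have hcop : IsCoprime (6:ℤ) C := by
    have h6 : (6:ℤ) = 2 * 3 := by norm_num
    rw [h6, IsCoprime.mul_left_iff]
    exact ⟨(Int.prime_two.coprime_iff_not_dvd).mpr h2,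
      (Int.prime_three.coprime_iff_not_dvd).mpr h3⟩
  exact Int.isCoprime_iff_gcd_eq_one.mp hcop
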